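/- Let F be a field of characteristic 0 and n, d ≥ 1. Let f ∈ F_{Ā,C̄}[X] have degree ≤ d and suppose f ∉ I_comm (i.e., the image of f in the free commutative nonassociative algebra F_{Ā,C}[X] is nonzero). Then the evaluation of f at (Z_1,…,Z_n) in C'_d(R) under the anticommutator product ⊙ is nonzero. -/

import Mathlib

noncomputable section

open scoped BigOperators

namespace NAPIT

/-- The list of (leaf label, leaf level) pairs of a nonassociative monomial (element of the
free magma), in left-to-right order, where the root of the monomial is at level `s`. -/
def leafData {n : ℕ} : FreeMagma (Fin n) → ℕ → List (Fin n × ℕ)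
  | FreeMagma.of i, s => [(i, s)]
  | FreeMagma.mul x y, s => leafData x (s + 1) ++ leafData y (s + 1)

/-- The degree (number of leaves) of a nonassociative monomial. -/
def degM {n : ℕ} : FreeMagma (Fin n) → ℕ
  | FreeMagma.of _ => 1
  | FreeMagma.mul x y => degM x + degM y

/-- The depth of a nonassociative monomial (root at level 1; the depth is the maximal level
of a leaf). -/
def depthM {n : ℕ} : FreeMagma (Fin n) → ℕ
  | FreeMagma.of _ => 1
  | FreeMagma.mul x y => max (depthM x) (depthM y) + 1

/-- Evaluation of a nonassociative monomial at `b : Fin n → A`, using `mul` as the product on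
`A`; this is the unique magma homomorphism `FreeMagma (Fin n) → (A, mul)` with `x_i ↦ b i`. -/
def evalWith {n : ℕ} {A : Type*} (mul : A → A → A) (b : Fin n → A) : FreeMagma (Fin n) → A
  | FreeMagma.of i => b i
  | FreeMagma.mul x y => mul (evalWith mul b x) (evalWith mul b y)

/-- The multiset of all variants `m_ε` of a monomial `m`, where `ε` ranges over all choices of
a Boolean for each internal node of `m`, and `m_ε` is obtained from `m` by swapping the two
children at exactly those internal nodes where `ε` is true (counted with multiplicity). -/
def variants {n : ℕ} : FreeMagma (Fin n) → Multiset (FreeMagma (Fin n))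
  | FreeMagma.of i => {FreeMagma.of i}
  | FreeMagma.mul x y =>
      (variants x).bind fun x' => (variants y).bind fun y' =>
        {FreeMagma.mul x' y', FreeMagma.mul y' x'}

/-- The underlying module of the algebra `A'_d(R)`: arrays `x[i,j,k]` with
`i, j ∈ Fin (d+1)`, `k ∈ Fin d` (zero-based; the paper's indices are shifted by one). -/
def Arr (d : ℕ) (R : Type*) : Type _ := Fin (d + 1) → Fin (d + 1) → Fin d → R

namespace Arr

variable {d : ℕ} {R : Type*}

instance instAddCommGroup [AddCommGroup R] : AddCommGroup (Arr d R) :=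
  inferInstanceAs (AddCommGroup (Fin (d + 1) → Fin (d + 1) → Fin d → R))

instance instModule {S : Type*} [Semiring S] [AddCommGroup R] [Module S R] :
    Module S (Arr d R) :=
  inferInstanceAs (Module S (Fin (d + 1) → Fin (d + 1) → Fin d → R))

/-- The bilinear product `∘` of `A'_d(R)`:
`(x ∘ y)[i,j,k] = ∑_{l} x[i,l,k+1] * y[l,j,k+1]` if `k+1` is a legal third index, else `0`. -/
def aprod [CommRing R] (x y : Arr d R) : Arr d R := fun i j k =>
  if h : (k : ℕ) + 1 < d then
    ∑ l : Fin (d + 1), x i l ⟨(k : ℕ) + 1, h⟩ * y l j ⟨(k : ℕ) + 1, h⟩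
  else 0

instance instMul [CommRing R] : Mul (Arr d R) := ⟨aprod⟩

end Arr

/-- The algebra `C'_d(R)`: same underlying module as `A'_d(R)`, with the anticommutator
product `a ⊙ b = a ∘ b + b ∘ a`. -/
def CArr (d : ℕ) (R : Type*) : Type _ := Arr d R

namespace CArr

variable {d : ℕ} {R : Type*}

/-- The identity map `A'_d(R) → C'_d(R)` of underlying modules. -/
def ofArr (x : Arr d R) : CArr d R := x

/-- The identity map `C'_d(R) → A'_d(R)` of underlying modules. -/
def toArr (x : CArr d R) : Arr d R := x

instance instAddCommGroup [AddCommGroup R] : AddCommGroup (CArr d R) :=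
  inferInstanceAs (AddCommGroup (Arr d R))

instance instModule {S : Type*} [Semiring S] [AddCommGroup R] [Module S R] :
    Module S (CArr d R) :=
  inferInstanceAs (Module S (Arr d R))

instance instMul [CommRing R] : Mul (CArr d R) :=
  ⟨fun a b => ofArr (toArr a * toArr b + toArr b * toArr a)⟩

end CArr

/-- The element `Z_i ∈ A'_d(R)`, `R = MvPolynomial (Fin n × Fin d × Fin d) F`, whose
`(j, j+1, k)` entry is the indeterminate `z_{i,j,k}` and whose other entries vanish. -/
def Z (F : Type*) [CommRing F] (n d : ℕ) (i : Fin n) :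
    Arr d (MvPolynomial (Fin n × Fin d × Fin d) F) := fun j j' k =>
  if h : (j : ℕ) < d ∧ (j' : ℕ) = (j : ℕ) + 1 then
    MvPolynomial.X (i, ⟨(j : ℕ), h.1⟩, k)
  else 0

/-- The element `Z_i` regarded as an element of `C'_d(R)`. -/
def ZC (F : Type*) [CommRing F] (n d : ℕ) (i : Fin n) :
    CArr d (MvPolynomial (Fin n × Fin d × Fin d) F) := CArr.ofArr (Z F n d i)

/-- The monomial `∏_{t=1}^{d'} z_{σ_m(t), (t-1) + k1, (l^m_t - 1) + k2}` associated to a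
nonassociative monomial `m` of degree `d'` and offsets `k1, k2` (all indices zero-based; the
paper's 1-based offsets are `k1 + 1`, `k2 + 1`).  Indices which would fall out of range are
discarded (this never happens in the intended range of parameters). -/
def monProd (F : Type*) [CommRing F] {n : ℕ} (d : ℕ) (k1 k2 : ℕ) (m : FreeMagma (Fin n)) :
    MvPolynomial (Fin n × Fin d × Fin d) F :=
  ((((leafData m 1).zipIdx).map Prod.swap).map fun p =>
    if h : p.1 + k1 < d ∧ p.2.2 - 1 + k2 < d then
      MvPolynomial.X (p.2.1, ⟨p.1 + k1, h.1⟩, ⟨p.2.2 - 1 + k2, h.2⟩)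
    else 0).prod

/-- `ψ(m) = ∑_ε ∏_{t=1}^{d'} z_{σ_{m_ε}(t), t, l^{m_ε}_t}` (1-based), the sum running over all
choices `ε` of a Boolean for each internal node of `m`. -/
def psi (F : Type*) [CommRing F] {n : ℕ} (d : ℕ) (m : FreeMagma (Fin n)) :
    MvPolynomial (Fin n × Fin d × Fin d) F :=
  ((variants m).map fun m' => monProd F d 0 0 m').sum

/-- The coefficient function of an element of the free nonunital nonassociative algebra. -/
def coeffOf {F : Type*} [Semiring F] {n : ℕ}
    (f : FreeNonUnitalNonAssocAlgebra F (Fin n)) : FreeMagma (Fin n) →₀ F := f.coeff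

/-- Evaluation of an element of the free nonunital nonassociative algebra on `x_1, …, x_n` at
the tuple `b`, with `mul` as the product of the target: the linear extension of
`m ↦ evalWith mul b m`, i.e. the unique nonunital `F`-algebra homomorphism sending
`x_i ↦ b i` into `(A, mul)`. -/
def evalNAWith {F : Type*} [Semiring F] {n : ℕ} {A : Type*}
    [AddCommMonoid A] [Module F A] (mul : A → A → A) (b : Fin n → A)
    (f : FreeNonUnitalNonAssocAlgebra F (Fin n)) : A :=
  Finsupp.sum (coeffOf f) fun m c => c • evalWith mul b m

/-- Evaluation of an element of the free nonunital nonassociative algebra at a tuple `b` of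
elements of a (not necessarily unital/associative) algebra `A`: the unique nonunital
`F`-algebra homomorphism sending `x_i ↦ b i`. -/
def evalNA {F : Type*} [Semiring F] {n : ℕ} {A : Type*}
    [AddCommMonoid A] [Mul A] [Module F A] (b : Fin n → A)
    (f : FreeNonUnitalNonAssocAlgebra F (Fin n)) : A :=
  evalNAWith (· * ·) b f

/-- Evaluation of an element of the unitization of the free nonunital nonassociative algebra
at a tuple `b` of elements of the unitization of `A`: the unique unital `F`-algebra
homomorphism sending `x_i ↦ b i` (and the adjoined unit to the unit). -/
def evalUnit {F : Type*} [CommSemiring F] {n : ℕ} {A : Type*}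
    [AddCommMonoid A] [Mul A] [Module F A] (b : Fin n → Unitization F A)
    (f : Unitization F (FreeNonUnitalNonAssocAlgebra F (Fin n))) : Unitization F A :=
  Unitization.inl f.fst + evalNA b f.snd

/-- The commutativity congruence on the free magma: the smallest equivalence relation with
`m₁ * m₂ ≈ m₂ * m₁` and compatible with the product. -/
inductive CommEq {n : ℕ} : FreeMagma (Fin n) → FreeMagma (Fin n) → Prop
  | refl (m : FreeMagma (Fin n)) : CommEq m m
  | symm {a b : FreeMagma (Fin n)} : CommEq a b → CommEq b a
  | trans {a b c : FreeMagma (Fin n)} : CommEq a b → CommEq b c → CommEq a c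
  | comm (a b : FreeMagma (Fin n)) : CommEq (a * b) (b * a)
  | mul_congr {a a' b b' : FreeMagma (Fin n)} :
      CommEq a a' → CommEq b b' → CommEq (a * b) (a' * b')

/-- The basis monomial `m` of the free nonunital nonassociative algebra. -/
def single1 (F : Type*) [Semiring F] {n : ℕ} (m : FreeMagma (Fin n)) :
    FreeNonUnitalNonAssocAlgebra F (Fin n) :=
  MonoidAlgebra.ofCoeff (Finsupp.single m 1 : FreeMagma (Fin n) →₀ F)

/-- `I_comm`: the `F`-linear span of `{m − m' : m ≈ m'}` inside the free nonunital
nonassociative algebra. -/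
def Icomm (F : Type*) [Field F] (n : ℕ) :
    Submodule F (FreeNonUnitalNonAssocAlgebra F (Fin n)) :=
  Submodule.span F
    {x | ∃ m m' : FreeMagma (Fin n), CommEq m m' ∧ x = single1 F m - single1 F m'}

section EnumL

/-- `List.enum` in terms of `List.zipIdx`. -/
def enumFromL {α : Type*} (k : ℕ) (l : List α) : List (ℕ × α) := (l.zipIdx k).map Prod.swap

/-- `List.enum` in terms of `List.zipIdx`. -/
def enumL {α : Type*} (l : List α) : List (ℕ × α) := enumFromL 0 l

lemma enumL_append {α : Type*} (xs ys : List α) :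
    enumL (xs ++ ys) = enumL xs ++ enumFromL xs.length ys := by
  simp [enumL, enumFromL, List.zipIdx_append]

lemma enumL_map {α β : Type*} (l : List α) (f : α → β) :
    enumL (l.map f) = (enumL l).map (Prod.map id f) := by
  simp only [enumL, enumFromL, List.zipIdx_map, List.map_map]
  rfl

lemma snd_mem_of_mem_enumFromL {α : Type*} {x : ℕ × α} {k : ℕ} {l : List α}
    (h : x ∈ enumFromL k l) : x.2 ∈ l := by
  obtain ⟨y, hy, rfl⟩ := List.mem_map.mp h
  exact List.fst_mem_of_mem_zipIdx hy

lemma fst_lt_add_of_mem_enumFromL {α : Type*} {x : ℕ × α} {k : ℕ} {l : List α}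
    (h : x ∈ enumFromL k l) : x.1 < k + l.length := by
  obtain ⟨y, hy, rfl⟩ := List.mem_map.mp h
  exact List.snd_lt_add_of_mem_zipIdx hy

lemma snd_eq_of_mem_enumFromL {α : Type*} {x : ℕ × α} {k : ℕ} {l : List α}
    (h : x ∈ enumFromL k l) :
    x.2 = l[x.1 - k]'(by
      have h1 := fst_lt_add_of_mem_enumFromL h
      obtain ⟨y, hy, rfl⟩ := List.mem_map.mp h
      have h2 := List.le_snd_of_mem_zipIdx hy
      simp only [Prod.fst_swap] at h1 ⊢
      omega) := by
  obtain ⟨y, hy, rfl⟩ := List.mem_map.mp h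
  exact List.fst_eq_of_mem_zipIdx hy

lemma enumFromL_eq_map_enumL {α : Type*} (k : ℕ) (l : List α) :
    enumFromL k l = (enumL l).map (Prod.map (· + k) id) := by
  simp only [enumL, enumFromL, List.map_map]
  rw [List.zipIdx_eq_map_add (i := k), List.map_map]
  refine List.map_congr_left fun p _ => ?_
  simp only [Function.comp_apply, Prod.swap, Prod.map]
  ext <;> simp [Nat.add_comm]

lemma enumL_length {α : Type*} (l : List α) : (enumL l).length = l.length := by
  simp [enumL, enumFromL]

lemma getElem_enumL {α : Type*} (l : List α) (i : ℕ) (h : i < (enumL l).length) :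
    (enumL l)[i] = (i, l[i]'(by rw [enumL_length] at h; exact h)) := by
  simp [enumL, enumFromL, List.getElem_zipIdx]

end EnumL

section MagmaLemmas
variable {n : ℕ}

attribute [local simp] FreeMagma.mul_eq

@[simp] lemma degM_of (i : Fin n) : degM (FreeMagma.of i) = 1 := rfl
@[simp] lemma degM_mul (x y : FreeMagma (Fin n)) : degM (x * y) = degM x + degM y := rfl
@[simp] lemma depthM_of (i : Fin n) : depthM (FreeMagma.of i) = 1 := rfl
@[simp] lemma depthM_mul (x y : FreeMagma (Fin n)) :
    depthM (x * y) = max (depthM x) (depthM y) + 1 := rfl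
@[simp] lemma leafData_of (i : Fin n) (s : ℕ) : leafData (FreeMagma.of i) s = [(i, s)] := rfl
@[simp] lemma leafData_mul (x y : FreeMagma (Fin n)) (s : ℕ) :
    leafData (x * y) s = leafData x (s + 1) ++ leafData y (s + 1) := rfl
@[simp] lemma evalWith_of {A : Type*} (mul : A → A → A) (b : Fin n → A) (i : Fin n) :
    evalWith mul b (FreeMagma.of i) = b i := rfl
@[simp] lemma evalWith_mul {A : Type*} (mul : A → A → A) (b : Fin n → A)
    (x y : FreeMagma (Fin n)) :
    evalWith mul b (x * y) = mul (evalWith mul b x) (evalWith mul b y) := rfl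
@[simp] lemma variants_of (i : Fin n) : variants (FreeMagma.of i) = {FreeMagma.of i} := rfl
@[simp] lemma variants_mul (x y : FreeMagma (Fin n)) :
    variants (x * y) = (variants x).bind fun x' => (variants y).bind fun y' =>
      {x' * y', y' * x'} := rfl

lemma one_le_degM (m : FreeMagma (Fin n)) : 1 ≤ degM m := by
  induction m with
  | ih1 i => simp
  | ih2 x y ihx ihy => simp only [degM_mul]; omega

lemma one_le_depthM (m : FreeMagma (Fin n)) : 1 ≤ depthM m := by
  induction m with
  | ih1 i => simp
  | ih2 x y ihx ihy => simp only [depthM_mul]; omega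

lemma depthM_le_degM (m : FreeMagma (Fin n)) : depthM m ≤ degM m := by
  induction m with
  | ih1 i => simp
  | ih2 x y ihx ihy =>
    have := one_le_degM x; have := one_le_degM y
    simp only [depthM_mul, degM_mul]; omega

lemma leafData_length (m : FreeMagma (Fin n)) (s : ℕ) :
    (leafData m s).length = degM m := by
  induction m generalizing s with
  | ih1 i => simp
  | ih2 x y ihx ihy => simp [ihx, ihy]

lemma leafData_ne_nil (m : FreeMagma (Fin n)) (s : ℕ) : leafData m s ≠ [] := by
  intro h
  have h1 := leafData_length m s
  have h2 := one_le_degM m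
  rw [h] at h1; simp at h1; omega

lemma mem_leafData_level {m : FreeMagma (Fin n)} {s : ℕ} {p : Fin n × ℕ}
    (hp : p ∈ leafData m s) : s ≤ p.2 ∧ p.2 < s + depthM m := by
  induction m generalizing s with
  | ih1 i => simp at hp; subst hp; simp
  | ih2 x y ihx ihy =>
    simp only [leafData_mul, List.mem_append] at hp
    rcases hp with hp | hp
    · have := ihx hp; simp only [depthM_mul]; omega
    · have := ihy hp; simp only [depthM_mul]; omega

lemma leafData_succ (m : FreeMagma (Fin n)) (s : ℕ) :
    leafData m (s + 1) = (leafData m s).map fun p => (p.1, p.2 + 1) := by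
  induction m generalizing s with
  | ih1 i => simp
  | ih2 x y ihx ihy => simp [ihx, ihy]

lemma leafData_append_inj :
    ∀ (m m' : FreeMagma (Fin n)) (s : ℕ) (L L' : List (Fin n × ℕ)),
      leafData m s ++ L = leafData m' s ++ L' → m = m' ∧ L = L' := by
  intro m
  induction m with
  | ih1 i =>
    intro m' s L L' h
    cases m' with
    | of i' =>
      simp only [leafData_of, List.cons_append, List.nil_append, List.cons.injEq,
        Prod.mk.injEq] at h
      exact ⟨by rw [h.1.1], h.2⟩
    | mul x' y' =>
      exfalso
      rcases hx : leafData x' (s + 1) with _ | ⟨p, t⟩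
      · exact leafData_ne_nil x' (s + 1) hx
      · have hmem : p ∈ leafData x' (s + 1) := by rw [hx]; exact List.mem_cons_self
        have hlev := (mem_leafData_level hmem).1
        have hcons : ((i, s) :: L) = p :: (t ++ (leafData y' (s + 1) ++ L')) := by
          simpa [FreeMagma.mul_eq, hx] using h
        have hps : (i, s) = p := by injection hcons
        rw [← hps] at hlev
        omega
  | ih2 x y ihx ihy =>
    intro m' s L L' h
    cases m' with
    | of i' =>
      exfalso
      rcases hx : leafData x (s + 1) with _ | ⟨p, t⟩
      · exact leafData_ne_nil x (s + 1) hx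
      · have hmem : p ∈ leafData x (s + 1) := by rw [hx]; exact List.mem_cons_self
        have hlev := (mem_leafData_level hmem).1
        have hcons : p :: (t ++ (leafData y (s + 1) ++ L)) = ((i', s) :: L') := by
          simpa [FreeMagma.mul_eq, hx] using h
        have hps : p = (i', s) := by injection hcons
        rw [hps] at hlev
        omega
    | mul x' y' =>
      simp only [FreeMagma.mul_eq, leafData_mul, List.append_assoc] at h
      obtain ⟨hx, h2⟩ := ihx x' (s + 1) _ _ h
      obtain ⟨hy, h3⟩ := ihy y' (s + 1) _ _ h2
      exact ⟨by rw [← FreeMagma.mul_eq, hx, hy], h3⟩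

lemma leafData_inj {m m' : FreeMagma (Fin n)} (h : leafData m 1 = leafData m' 1) :
    m = m' := by
  have := leafData_append_inj m m' 1 [] [] (by simpa using h)
  exact this.1

lemma CommEq.degM_eq {a b : FreeMagma (Fin n)} (h : CommEq a b) : degM a = degM b := by
  induction h with
  | refl => rfl
  | symm _ ih => omega
  | trans _ _ ih1 ih2 => omega
  | comm a b => simp; omega
  | mul_congr _ _ ih1 ih2 => simp [ih1, ih2]

lemma mem_variants_self (m : FreeMagma (Fin n)) : m ∈ variants m := by
  induction m with
  | ih1 i => simp
  | ih2 x y ihx ihy =>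
    simp only [variants_mul, Multiset.mem_bind]
    exact ⟨x, ihx, y, ihy, by simp⟩

lemma commEq_of_mem_variants {m m' : FreeMagma (Fin n)} (h : m' ∈ variants m) :
    CommEq m m' := by
  induction m generalizing m' with
  | ih1 i => simp at h; subst h; exact CommEq.refl _
  | ih2 x y ihx ihy =>
    simp only [variants_mul, Multiset.mem_bind] at h
    obtain ⟨x', hx', y', hy', h⟩ := h
    simp only [Multiset.insert_eq_cons, Multiset.mem_cons, Multiset.mem_singleton] at h
    rcases h with rfl | rfl
    · exact CommEq.mul_congr (ihx hx') (ihy hy')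
    · exact CommEq.trans (CommEq.mul_congr (ihx hx') (ihy hy')) (CommEq.comm _ _)

lemma variants_eq_of_commEq {a b : FreeMagma (Fin n)} (h : CommEq a b) :
    variants a = variants b := by
  induction h with
  | refl => rfl
  | symm _ ih => exact ih.symm
  | trans _ _ ih1 ih2 => exact ih1.trans ih2
  | comm a b =>
    simp only [variants_mul]
    rw [Multiset.bind_bind]
    apply Multiset.bind_congr; intro b' _
    apply Multiset.bind_congr; intro a' _
    simp only [Multiset.insert_eq_cons]
    exact Multiset.cons_swap _ _ _
  | mul_congr _ _ ih1 ih2 => simp [variants_mul, ih1, ih2]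

end MagmaLemmas

section IcommLemmas
open scoped Classical

variable {F : Type*} [Field F] {n : ℕ}

/-- The commutativity setoid on the free magma. -/
def commSetoid (n : ℕ) : Setoid (FreeMagma (Fin n)) :=
  ⟨CommEq, ⟨CommEq.refl, CommEq.symm, CommEq.trans⟩⟩

lemma coeffOf_add (f g : FreeNonUnitalNonAssocAlgebra F (Fin n)) :
    coeffOf (f + g) = coeffOf f + coeffOf g := by simp [coeffOf]
lemma coeffOf_smul (c : F) (f : FreeNonUnitalNonAssocAlgebra F (Fin n)) :
    coeffOf (c • f) = c • coeffOf f := by simp [coeffOf]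
lemma coeffOf_sub (f g : FreeNonUnitalNonAssocAlgebra F (Fin n)) :
    coeffOf (f - g) = coeffOf f - coeffOf g := by simp [coeffOf]
lemma coeffOf_zero : coeffOf (0 : FreeNonUnitalNonAssocAlgebra F (Fin n)) = 0 := by
  simp [coeffOf]
lemma coeffOf_single1 (m : FreeMagma (Fin n)) :
    coeffOf (single1 F m) = Finsupp.single m 1 := by simp [coeffOf, single1]

lemma mapDomain_sub' {G : Type*} [AddCommGroup G] {α β : Type*} (g : α → β) (a b : α →₀ G) :
    Finsupp.mapDomain g (a - b) = Finsupp.mapDomain g a - Finsupp.mapDomain g b :=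
  map_sub (Finsupp.mapDomain.addMonoidHom g) a b

/-- `f` pushed down to the quotient by the commutativity congruence. -/
def mapQ (f : FreeNonUnitalNonAssocAlgebra F (Fin n)) : Quotient (commSetoid n) →₀ F :=
  Finsupp.mapDomain (Quotient.mk (commSetoid n)) (coeffOf f)

lemma mapQ_apply (f : FreeNonUnitalNonAssocAlgebra F (Fin n)) (m₀ : FreeMagma (Fin n)) :
    mapQ f (Quotient.mk (commSetoid n) m₀) =
      ∑ m ∈ (coeffOf f).support, if CommEq m m₀ then coeffOf f m else 0 := by
  rw [mapQ, Finsupp.mapDomain, Finsupp.sum_apply, Finsupp.sum]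
  refine Finset.sum_congr rfl fun m _ => ?_
  rw [Finsupp.single_apply]
  refine if_congr ?_ rfl rfl
  exact ⟨fun h => Quotient.exact h, fun h => Quotient.sound h⟩

lemma mapQ_zero_of_mem_Icomm {f : FreeNonUnitalNonAssocAlgebra F (Fin n)}
    (hf : f ∈ Icomm F n) : mapQ f = 0 := by
  refine Submodule.span_induction ?_ ?_ ?_ ?_ hf
  · rintro x ⟨m, m', hcomm, rfl⟩
    show Finsupp.mapDomain _ (coeffOf (single1 F m - single1 F m')) = 0
    have : coeffOf (single1 F m - single1 F m')
        = Finsupp.single m 1 - Finsupp.single m' 1 := by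
      rw [coeffOf_sub, coeffOf_single1, coeffOf_single1]
    rw [this, mapDomain_sub', Finsupp.mapDomain_single, Finsupp.mapDomain_single,
      Quotient.sound hcomm, sub_self]
  · rw [mapQ, coeffOf_zero]
    exact Finsupp.mapDomain_zero
  · intro x y _ _ hx hy
    rw [mapQ, coeffOf_add]
    rw [Finsupp.mapDomain_add]; rw [mapQ] at hx hy; rw [hx, hy, add_zero]
  · intro c x _ hx
    rw [mapQ, coeffOf_smul]
    rw [Finsupp.mapDomain_smul]; rw [mapQ] at hx; rw [hx, smul_zero]

lemma mem_Icomm_of_mapQ_eq_zero_aux :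
    ∀ (N : ℕ) (f : FreeNonUnitalNonAssocAlgebra F (Fin n)),
      (coeffOf f).support.card ≤ N → mapQ f = 0 → f ∈ Icomm F n := by
  intro N
  induction N with
  | zero =>
    intro f hcard _
    have h1 : (coeffOf f).support = ∅ := Finset.card_eq_zero.mp (Nat.le_zero.mp hcard)
    have h2 : coeffOf f = 0 := Finsupp.support_eq_empty.mp h1
    have h3 : f = 0 := MonoidAlgebra.coeff_injective (h2.trans coeffOf_zero.symm)
    rw [h3]; exact zero_mem _
  | succ N ih =>
    intro f hcard h0
    rcases Finset.eq_empty_or_nonempty (coeffOf f).support with hf | ⟨m, hm⟩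
    · have h2 : coeffOf f = 0 := Finsupp.support_eq_empty.mp hf
      have h3 : f = 0 := MonoidAlgebra.coeff_injective (h2.trans coeffOf_zero.symm)
      rw [h3]; exact zero_mem _
    · have hc : coeffOf f m ≠ 0 := Finsupp.mem_support_iff.mp hm
      set c := coeffOf f m with hcdef
      have hsum : ∑ x ∈ (coeffOf f).support, (if CommEq x m then coeffOf f x else 0) = 0 := by
        rw [← mapQ_apply, h0]; rfl
      have hex : ∃ m' ∈ (coeffOf f).support, m' ≠ m ∧ CommEq m' m := by
        by_contra hno
        push_neg at hno
        have : ∑ x ∈ (coeffOf f).support, (if CommEq x m then coeffOf f x else 0) = c := by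
          rw [Finset.sum_eq_single m]
          · rw [if_pos (CommEq.refl m)]
          · intro x hx hxm
            rw [if_neg (hno x hx hxm)]
          · intro hmn; exact absurd hm hmn
        rw [hsum] at this; exact hc this.symm
      obtain ⟨m', hm's, hm'ne, hcomm⟩ := hex
      set g := f - c • (single1 F m - single1 F m') with hg
      have hgm : coeffOf g = coeffOf f - c • (Finsupp.single m 1 - Finsupp.single m' 1) := by
        rw [hg, coeffOf_sub, coeffOf_smul, coeffOf_sub, coeffOf_single1, coeffOf_single1]
      have hgapp : ∀ x, coeffOf g x = coeffOf f x -
          c * ((if m = x then (1:F) else 0) - (if m' = x then (1:F) else 0)) := by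
        intro x
        rw [hgm]
        simp [Finsupp.sub_apply, Finsupp.smul_apply, smul_eq_mul, Finsupp.single_apply]
      have hsub : (coeffOf g).support ⊆ (coeffOf f).support.erase m := by
        intro x hx
        rw [Finsupp.mem_support_iff] at hx
        rcases eq_or_ne x m with rfl | hxm
        · exfalso; apply hx
          rw [hgapp x, if_pos rfl, if_neg (by exact fun h => hm'ne h)]
          simp [hcdef]
        · refine Finset.mem_erase.mpr ⟨hxm, ?_⟩
          rcases eq_or_ne x m' with rfl | hxm'
          · exact hm's
          · rw [Finsupp.mem_support_iff]
            rw [hgapp x, if_neg (fun h => hxm h.symm), if_neg (fun h => hxm' h.symm)] at hx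
            simpa using hx
      have hcard' : (coeffOf g).support.card ≤ N := by
        have h1 := Finset.card_le_card hsub
        have h2 := Finset.card_erase_of_mem hm
        have h3 : 0 < (coeffOf f).support.card := Finset.card_pos.mpr ⟨m, hm⟩
        omega
      have hmapg : mapQ g = 0 := by
        rw [mapQ, hgm, mapDomain_sub', Finsupp.mapDomain_smul,
          mapDomain_sub', Finsupp.mapDomain_single, Finsupp.mapDomain_single,
          Quotient.sound (hcomm.symm : CommEq m m'), sub_self, smul_zero, sub_zero,
          ← mapQ, h0]
      have hgI := ih g hcard' hmapg
      have hfeq : f = g + c • (single1 F m - single1 F m') := by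
        rw [hg]; abel
      rw [hfeq]
      exact Submodule.add_mem _ hgI
        (Submodule.smul_mem _ _ (Submodule.subset_span ⟨m, m', hcomm.symm, rfl⟩))

lemma exists_good_class {f : FreeNonUnitalNonAssocAlgebra F (Fin n)} (hI : f ∉ Icomm F n) :
    ∃ m₀ ∈ (coeffOf f).support,
      ∑ m ∈ (coeffOf f).support, (if CommEq m m₀ then coeffOf f m else 0) ≠ 0 := by
  have h0 : mapQ f ≠ 0 := by
    intro h
    exact hI (mem_Icomm_of_mapQ_eq_zero_aux (coeffOf f).support.card f le_rfl h)
  obtain ⟨b, hb⟩ := Finsupp.support_nonempty_iff.mpr h0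
  have hsub : (mapQ f).support ⊆ (coeffOf f).support.image (Quotient.mk (commSetoid n)) :=
    Finsupp.mapDomain_support
  obtain ⟨m₀, hm₀, hbm⟩ := Finset.mem_image.mp (hsub hb)
  refine ⟨m₀, hm₀, ?_⟩
  rw [← mapQ_apply, hbm]
  exact Finsupp.mem_support_iff.mp hb

end IcommLemmas


section ArrLemmas
variable {d : ℕ} {R : Type*}

lemma Arr.zero_apply [AddCommGroup R] (i j : Fin (d + 1)) (k : Fin d) :
    (0 : Arr d R) i j k = 0 := rfl
lemma Arr.add_apply [AddCommGroup R] (x y : Arr d R) (i j : Fin (d + 1)) (k : Fin d) :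
    (x + y) i j k = x i j k + y i j k := rfl
lemma Arr.mul_def [CommRing R] (x y : Arr d R) : x * y = Arr.aprod x y := rfl

instance Arr.instNonUnitalNonAssocRing [CommRing R] : NonUnitalNonAssocRing (Arr d R) :=
  { Arr.instAddCommGroup, Arr.instMul with
    left_distrib := by
      intro a b c
      funext i j k
      show Arr.aprod a (b + c) i j k = Arr.aprod a b i j k + Arr.aprod a c i j k
      unfold Arr.aprod
      split_ifs with h
      · rw [← Finset.sum_add_distrib]
        exact Finset.sum_congr rfl fun l _ => by rw [Arr.add_apply]; ring
      · simp
    right_distrib := by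
      intro a b c
      funext i j k
      show Arr.aprod (a + b) c i j k = Arr.aprod a c i j k + Arr.aprod b c i j k
      unfold Arr.aprod
      split_ifs with h
      · rw [← Finset.sum_add_distrib]
        exact Finset.sum_congr rfl fun l _ => by rw [Arr.add_apply]; ring
      · simp
    zero_mul := by
      intro a
      funext i j k
      show Arr.aprod 0 a i j k = (0 : Arr d R) i j k
      unfold Arr.aprod
      rw [Arr.zero_apply]
      split_ifs with h
      · exact Finset.sum_eq_zero fun l _ => by rw [Arr.zero_apply, zero_mul]
      · rfl
    mul_zero := by
      intro a
      funext i j k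
      show Arr.aprod a 0 i j k = (0 : Arr d R) i j k
      unfold Arr.aprod
      rw [Arr.zero_apply]
      split_ifs with h
      · exact Finset.sum_eq_zero fun l _ => by rw [Arr.zero_apply, mul_zero]
      · rfl }

lemma Arr.multiset_sum_apply [AddCommGroup R] (s : Multiset (Arr d R))
    (i j : Fin (d + 1)) (k : Fin d) :
    s.sum i j k = (s.map fun x => x i j k).sum := by
  induction s using Multiset.induction_on with
  | empty => simp [Arr.zero_apply]
  | cons a t ih => simp [Multiset.sum_cons, Arr.add_apply, ih]

lemma CArr.mul_def [CommRing R] (a b : CArr d R) :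
    a * b = CArr.ofArr (CArr.toArr a * CArr.toArr b + CArr.toArr b * CArr.toArr a) := rfl

lemma CArr.toArr_ofArr [CommRing R] (x : Arr d R) : CArr.toArr (CArr.ofArr x) = x := rfl

end ArrLemmas

section EvalCLemmas
variable {F : Type*} [CommRing F] {n d : ℕ}

lemma evalC_eq (m : FreeMagma (Fin n)) :
    evalWith (· * ·) (ZC F n d) m
      = CArr.ofArr ((variants m).map fun m' => evalWith (· * ·) (Z F n d) m').sum := by
  induction m with
  | ih1 i => simp [ZC, CArr.ofArr]; rfl
  | ih2 x y ihx ihy =>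
    set E : FreeMagma (Fin n) → Arr d (MvPolynomial (Fin n × Fin d × Fin d) F) :=
      fun m' => evalWith (· * ·) (Z F n d) m' with hE
    rw [evalWith_mul, ihx, ihy, CArr.mul_def, CArr.toArr_ofArr, CArr.toArr_ofArr]
    refine congrArg CArr.ofArr ?_
    simp only [variants_mul, Multiset.map_bind, Multiset.sum_bind]
    have h2 : ∀ x' : FreeMagma (Fin n),
        ((variants y).map fun y' =>
          ((({x' * y', y' * x'} : Multiset (FreeMagma (Fin n))).map E).sum)).sum
        = E x' * ((variants y).map E).sum + ((variants y).map E).sum * E x' := by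
      intro x'
      have hpair : ∀ y' : FreeMagma (Fin n),
          (({x' * y', y' * x'} : Multiset (FreeMagma (Fin n))).map E).sum
            = E x' * E y' + E y' * E x' := by
        intro y'
        simp [Multiset.insert_eq_cons, hE, Arr.mul_def]
      rw [Multiset.map_congr rfl fun y' _ => hpair y']
      rw [Multiset.sum_map_add, Multiset.sum_map_mul_left, Multiset.sum_map_mul_right]
    rw [Multiset.map_congr rfl fun x' _ => h2 x']
    rw [Multiset.sum_map_add, Multiset.sum_map_mul_right, Multiset.sum_map_mul_left]

end EvalCLemmas


section MonProdLemmas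
variable {F : Type*} [CommRing F] {n d : ℕ}

lemma monProd_eq_list (m : FreeMagma (Fin n)) (k1 k2 : ℕ) :
    monProd F d k1 k2 m = ((enumL (leafData m 1)).map fun p =>
      if h : p.1 + k1 < d ∧ p.2.2 - 1 + k2 < d then
        MvPolynomial.X (p.2.1, ⟨p.1 + k1, h.1⟩, ⟨p.2.2 - 1 + k2, h.2⟩)
      else (0 : MvPolynomial (Fin n × Fin d × Fin d) F)).prod := rfl

lemma monProd_of (i : Fin n) (k1 k2 : ℕ) (hk1 : k1 < d) (hk2 : k2 < d) :
    monProd F d k1 k2 (FreeMagma.of i)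
      = MvPolynomial.X (i, ⟨k1, hk1⟩, ⟨k2, hk2⟩) := by
  have h0 : monProd F d k1 k2 (FreeMagma.of i)
      = [if h : 0 + k1 < d ∧ 1 - 1 + k2 < d then
          MvPolynomial.X (i, (⟨0 + k1, h.1⟩ : Fin d), (⟨1 - 1 + k2, h.2⟩ : Fin d))
        else (0 : MvPolynomial (Fin n × Fin d × Fin d) F)].prod := rfl
  rw [h0, List.prod_singleton,
    dif_pos (⟨by omega, by omega⟩ : 0 + k1 < d ∧ 1 - 1 + k2 < d)]
  exact congrArg MvPolynomial.X (by
    simp only [Prod.mk.injEq, Fin.mk.injEq, true_and]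
    omega)

lemma monProd_mul (x y : FreeMagma (Fin n)) (k1 k2 : ℕ) :
    monProd F d k1 k2 (x * y)
      = monProd F d k1 (k2 + 1) x * monProd F d (k1 + degM x) (k2 + 1) y := by
  rw [monProd_eq_list, monProd_eq_list, monProd_eq_list]
  have h1 : leafData (x * y) 1
      = (leafData x 1).map (fun p => (p.1, p.2 + 1))
        ++ (leafData y 1).map (fun p => (p.1, p.2 + 1)) := by
    rw [leafData_mul, leafData_succ x 1, leafData_succ y 1]
  rw [h1, enumL_append, List.map_append, List.prod_append]
  congr 1
  · refine congrArg List.prod ?_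
    rw [enumL_map, List.map_map]
    refine List.map_congr_left fun p hp => ?_
    have hl : 1 ≤ p.2.2 := (mem_leafData_level (snd_mem_of_mem_enumFromL hp)).1
    rcases p with ⟨t, a, l⟩
    simp only at hl
    dsimp only [Function.comp_apply, Prod.map_apply, id_eq]
    by_cases hc : t + k1 < d ∧ l - 1 + (k2 + 1) < d
    · rw [dif_pos hc, dif_pos (by omega : t + k1 < d ∧ (l + 1) - 1 + k2 < d)]
      exact congrArg MvPolynomial.X (by
        simp only [Prod.mk.injEq, Fin.mk.injEq, true_and]
        omega)
    · rw [dif_neg (by omega), dif_neg hc]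
  · refine congrArg List.prod ?_
    rw [List.length_map, leafData_length, enumFromL_eq_map_enumL, enumL_map,
      List.map_map, List.map_map]
    refine List.map_congr_left fun p hp => ?_
    have hl : 1 ≤ p.2.2 := (mem_leafData_level (snd_mem_of_mem_enumFromL hp)).1
    rcases p with ⟨t, a, l⟩
    simp only at hl
    dsimp only [Function.comp_apply, Prod.map_apply, id_eq]
    by_cases hc : t + (k1 + degM x) < d ∧ l - 1 + (k2 + 1) < d
    · rw [dif_pos hc, dif_pos (by omega : t + degM x + k1 < d ∧ (l + 1) - 1 + k2 < d)]
      exact congrArg MvPolynomial.X (by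
        simp only [Prod.mk.injEq, Fin.mk.injEq, true_and]
        omega)
    · rw [dif_neg (by omega), dif_neg hc]

lemma evalA_apply (m : FreeMagma (Fin n)) (j j' : Fin (d + 1)) (k : Fin d)
    (h1 : (j : ℕ) + degM m ≤ d) (h2 : (k : ℕ) + depthM m ≤ d) :
    evalWith (· * ·) (Z F n d) m j j' k
      = if (j' : ℕ) = (j : ℕ) + degM m then monProd F d j k m else 0 := by
  induction m generalizing j j' k with
  | ih1 i =>
    rw [evalWith_of]
    have hz : Z F n d i j j' k
        = if h : (j : ℕ) < d ∧ (j' : ℕ) = (j : ℕ) + 1 then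
            MvPolynomial.X (i, ⟨(j : ℕ), h.1⟩, k) else 0 := rfl
    rw [hz]
    simp only [degM_of] at h1; rw [degM_of]
    by_cases hj' : (j' : ℕ) = (j : ℕ) + 1
    · rw [dif_pos ⟨by omega, hj'⟩, if_pos hj', monProd_of i (j : ℕ) (k : ℕ) (by omega) k.isLt]
    · rw [dif_neg (by tauto), if_neg hj']
  | ih2 x y ihx ihy =>
    have hdx := one_le_degM x
    have hdy := one_le_degM y
    have hpx1 := le_max_left (depthM x) (depthM y)
    have hpy1 := le_max_right (depthM x) (depthM y)
    have hpxd := one_le_depthM x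
    simp only [degM_mul] at h1
    simp only [depthM_mul] at h2
    have hk1d : (k : ℕ) + 1 < d := by omega
    have hx1 : (j : ℕ) + degM x ≤ d := by omega
    have hy1 : ((j : ℕ) + degM x) + degM y ≤ d := by omega
    have hx2 : ((k : ℕ) + 1) + depthM x ≤ d := by omega
    have hy2 : ((k : ℕ) + 1) + depthM y ≤ d := by omega
    have hlt : (j : ℕ) + degM x < d + 1 := by omega
    have happ : (evalWith (· * ·) (Z F n d) x * evalWith (· * ·) (Z F n d) y) j j' k
        = if h : (k : ℕ) + 1 < d then
            ∑ l : Fin (d + 1), evalWith (· * ·) (Z F n d) x j l ⟨(k : ℕ) + 1, h⟩ *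
              evalWith (· * ·) (Z F n d) y l j' ⟨(k : ℕ) + 1, h⟩ else 0 := rfl
    rw [evalWith_mul, happ, dif_pos hk1d]
    have hzero : ∀ l : Fin (d + 1), l ≠ (⟨(j : ℕ) + degM x, hlt⟩ : Fin (d + 1)) →
        evalWith (· * ·) (Z F n d) x j l ⟨(k : ℕ) + 1, hk1d⟩ *
          evalWith (· * ·) (Z F n d) y l j' ⟨(k : ℕ) + 1, hk1d⟩ = 0 := by
      intro l hl
      rw [ihx j l ⟨(k : ℕ) + 1, hk1d⟩ hx1 hx2, if_neg, zero_mul]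
      intro hval
      exact hl (Fin.ext hval)
    rw [Fintype.sum_eq_single _ hzero]
    rw [ihx j _ ⟨(k : ℕ) + 1, hk1d⟩ hx1 hx2, if_pos rfl]
    rw [ihy ⟨(j : ℕ) + degM x, hlt⟩ j' ⟨(k : ℕ) + 1, hk1d⟩ hy1 hy2]
    rw [monProd_mul x y (j : ℕ) (k : ℕ)]
    simp only [Fin.val_mk]; rw [degM_mul]
    by_cases hj' : (j' : ℕ) = (j : ℕ) + degM x + degM y
    · rw [if_pos hj', if_pos (by omega)]
    · rw [if_neg hj', if_neg (by omega), mul_zero]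

end MonProdLemmas


section ExpLemmas
variable {F : Type*} [CommRing F] {n d : ℕ}

/-- The exponent vector of `monProd F d 0 0 m`. -/
def expOf (d : ℕ) {n : ℕ} (m : FreeMagma (Fin n)) : (Fin n × Fin d × Fin d) →₀ ℕ :=
  ((enumL (leafData m 1)).map fun p =>
    if h : p.1 < d ∧ p.2.2 - 1 < d then
      Finsupp.single (p.2.1, ⟨p.1, h.1⟩, ⟨p.2.2 - 1, h.2⟩) (1 : ℕ)
    else 0).sum

/-- The variable associated to an enumerated leaf. -/
def vOf (hd : 0 < d) (p : ℕ × (Fin n × ℕ)) : Fin n × Fin d × Fin d :=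
  if h : p.1 < d ∧ p.2.2 - 1 < d then (p.2.1, ⟨p.1, h.1⟩, ⟨p.2.2 - 1, h.2⟩)
  else (p.2.1, ⟨0, hd⟩, ⟨0, hd⟩)

lemma mem_enum_leafData_bounds {m : FreeMagma (Fin n)} (hm : degM m ≤ d)
    {p : ℕ × (Fin n × ℕ)} (hp : p ∈ enumL (leafData m 1)) :
    p.1 < d ∧ p.2.2 - 1 < d := by
  have h1 := fst_lt_add_of_mem_enumFromL hp
  rw [leafData_length] at h1
  have hmem := snd_mem_of_mem_enumFromL hp
  have h2 := (mem_leafData_level hmem).2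
  have h3 := depthM_le_degM m
  have h4 := one_le_degM m
  omega

lemma prod_X_eq_monomial (V : List (Fin n × Fin d × Fin d)) :
    ((V.map fun v => (MvPolynomial.X v : MvPolynomial (Fin n × Fin d × Fin d) F)).prod)
      = MvPolynomial.monomial ((V.map fun v => Finsupp.single v (1 : ℕ)).sum) (1 : F) := by
  induction V with
  | nil =>
    simp only [List.map_nil, List.prod_nil, List.sum_nil]
    rw [← MvPolynomial.C_apply, map_one]
  | cons v V ih =>
    simp only [List.map_cons, List.prod_cons, List.sum_cons, ih]
    rw [MvPolynomial.X, MvPolynomial.monomial_mul, one_mul]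

lemma monProd_map_eq (hd : 0 < d) (m : FreeMagma (Fin n)) (hm : degM m ≤ d) :
    ((enumL (leafData m 1)).map fun p =>
      if h : p.1 + 0 < d ∧ p.2.2 - 1 + 0 < d then
        MvPolynomial.X (p.2.1, ⟨p.1 + 0, h.1⟩, ⟨p.2.2 - 1 + 0, h.2⟩)
      else (0 : MvPolynomial (Fin n × Fin d × Fin d) F))
    = ((enumL (leafData m 1)).map (vOf hd)).map fun v => MvPolynomial.X v := by
  rw [List.map_map]
  refine List.map_congr_left fun p hp => ?_
  have hb := mem_enum_leafData_bounds hm hp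
  dsimp only [Function.comp_apply]
  rw [dif_pos (by omega : p.1 + 0 < d ∧ p.2.2 - 1 + 0 < d), vOf, dif_pos hb]
  exact congrArg MvPolynomial.X (by
    simp only [Prod.mk.injEq, Fin.mk.injEq, true_and]
    omega)

lemma expOf_map_eq (hd : 0 < d) (m : FreeMagma (Fin n)) (hm : degM m ≤ d) :
    ((enumL (leafData m 1)).map fun p =>
      if h : p.1 < d ∧ p.2.2 - 1 < d then
        Finsupp.single (p.2.1, ⟨p.1, h.1⟩, ⟨p.2.2 - 1, h.2⟩) (1 : ℕ)
      else 0)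
    = ((enumL (leafData m 1)).map (vOf hd)).map fun v => Finsupp.single v (1 : ℕ) := by
  rw [List.map_map]
  refine List.map_congr_left fun p hp => ?_
  have hb := mem_enum_leafData_bounds hm hp
  dsimp only [Function.comp_apply]
  rw [dif_pos hb, vOf, dif_pos hb]

lemma monProd_eq_monomial (hd : 0 < d) (m : FreeMagma (Fin n)) (hm : degM m ≤ d) :
    monProd F d 0 0 m = MvPolynomial.monomial (expOf d m) (1 : F) := by
  rw [monProd_eq_list, monProd_map_eq hd m hm, prod_X_eq_monomial]
  congr 1
  rw [expOf, expOf_map_eq hd m hm]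

lemma list_single_sum_apply {α : Type*} [DecidableEq α] (V : List α) (w : α) :
    ((V.map fun v => Finsupp.single v (1 : ℕ)).sum) w
      = (V.map fun v => if v = w then (1 : ℕ) else 0).sum := by
  induction V with
  | nil => simp
  | cons v V ih =>
    simp only [List.map_cons, List.sum_cons, Finsupp.add_apply, ih, Finsupp.single_apply]

lemma expOf_apply_ne_zero_iff (hd : 0 < d) {m : FreeMagma (Fin n)} (hm : degM m ≤ d)
    (w : Fin n × Fin d × Fin d) :
    expOf d m w ≠ 0 ↔ w ∈ (enumL (leafData m 1)).map (vOf hd) := by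
  rw [expOf, expOf_map_eq hd m hm, list_single_sum_apply]
  constructor
  · intro h
    by_contra hmem
    apply h
    rw [List.map_map]
    refine List.sum_eq_zero fun x hx => ?_
    obtain ⟨p, hp, rfl⟩ := List.mem_map.mp hx
    dsimp only [Function.comp_apply]
    rw [if_neg]
    intro he
    exact hmem (List.mem_map.mpr ⟨p, hp, he⟩)
  · intro hmem h
    obtain ⟨p, hp, he⟩ := List.mem_map.mp hmem
    have : (1 : ℕ) ∈ ((enumL (leafData m 1)).map (vOf hd)).map
        fun v => if v = w then (1 : ℕ) else 0 := by
      refine List.mem_map.mpr ⟨vOf hd p, List.mem_map.mpr ⟨p, hp, rfl⟩, ?_⟩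
      rw [if_pos he]
    have hle := List.single_le_sum (fun (x : ℕ) _ => Nat.zero_le x) 1 this
    omega

end ExpLemmas


section InjLemmas
variable {F : Type*} [CommRing F] {n d : ℕ}

lemma degM_of_mem_variants {m m' : FreeMagma (Fin n)} (h : m' ∈ variants m) :
    degM m' = degM m :=
  (commEq_of_mem_variants h).degM_eq.symm

lemma vOf_mem_iff (hd : 0 < d) {m : FreeMagma (Fin n)} (hm : degM m ≤ d)
    (a : Fin n) (t : ℕ) (ht : t < d) (b : Fin d) :
    ((a, ⟨t, ht⟩, b) : Fin n × Fin d × Fin d) ∈ (enumL (leafData m 1)).map (vOf hd) ↔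
      ∃ h : t < (leafData m 1).length, (leafData m 1)[t] = (a, (b : ℕ) + 1) := by
  constructor
  · intro hmem
    obtain ⟨p, hp, he⟩ := List.mem_map.mp hmem
    have hb := mem_enum_leafData_bounds hm hp
    have hlev : 1 ≤ p.2.2 := (mem_leafData_level (snd_mem_of_mem_enumFromL hp)).1
    have hfst := fst_lt_add_of_mem_enumFromL hp
    have hsnd := snd_eq_of_mem_enumFromL hp
    rw [vOf, dif_pos hb] at he
    simp only [Prod.mk.injEq, Fin.mk.injEq] at he
    obtain ⟨ha, hu, hb2⟩ := he
    have hb2' : p.2.2 - 1 = (b : ℕ) := by rw [← hb2]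
    simp only [Nat.sub_zero] at hsnd
    subst hu
    rw [leafData_length] at hfst
    refine ⟨by rw [leafData_length]; omega, ?_⟩
    rw [← hsnd, Prod.ext_iff]
    exact ⟨ha, by show p.2.2 = (b : ℕ) + 1; omega⟩
  · rintro ⟨h, he⟩
    have hlt : t < (enumL (leafData m 1)).length := by
      rw [enumL_length]; exact h
    have henum : (t, (leafData m 1)[t]) ∈ enumL (leafData m 1) := by
      have hg := getElem_enumL (leafData m 1) t hlt
      exact hg ▸ List.getElem_mem hlt
    refine List.mem_map.mpr ⟨(t, (leafData m 1)[t]), henum, ?_⟩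
    have hb := mem_enum_leafData_bounds hm henum
    have he1 : (leafData m 1)[t].1 = a := by rw [he]
    have he2 : (leafData m 1)[t].2 = (b : ℕ) + 1 := by rw [he]
    rw [vOf, dif_pos hb]
    simp only [Prod.mk.injEq, Fin.mk.injEq]
    refine ⟨he1, trivial, ?_⟩
    apply Fin.ext
    simp only [Fin.val_mk]
    omega

lemma expOf_inj (hd : 0 < d) {m m' : FreeMagma (Fin n)} (hm : degM m ≤ d)
    (hm' : degM m' ≤ d) (hdeg : degM m = degM m') (h : expOf d m = expOf d m') :
    m = m' := by
  apply leafData_inj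
  have hlen : (leafData m 1).length = (leafData m' 1).length := by
    rw [leafData_length, leafData_length, hdeg]
  apply List.ext_getElem hlen
  intro t h1 h2
  have ht : t < d := by rw [leafData_length] at h1; omega
  have hlev := mem_leafData_level (List.getElem_mem h1)
  have hdep := depthM_le_degM m
  have hbd : (leafData m 1)[t].2 - 1 < d := by omega
  have hcoe : ((⟨(leafData m 1)[t].2 - 1, hbd⟩ : Fin d) : ℕ) + 1 = (leafData m 1)[t].2 := by
    simp only [Fin.val_mk]; omega
  have h1' : expOf d m ((leafData m 1)[t].1, ⟨t, ht⟩, ⟨(leafData m 1)[t].2 - 1, hbd⟩) ≠ 0 := by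
    rw [expOf_apply_ne_zero_iff hd hm, vOf_mem_iff hd hm]
    exact ⟨h1, by rw [hcoe]⟩
  rw [h, expOf_apply_ne_zero_iff hd hm', vOf_mem_iff hd hm'] at h1'
  obtain ⟨hh, he⟩ := h1'
  rw [he, hcoe]

lemma sum_map_indicator {α : Type*} [DecidableEq α] (s : Multiset α) (x : α) :
    ((s.map fun a => if a = x then (1 : F) else 0).sum) = (s.count x : F) := by
  induction s using Multiset.induction_on with
  | empty => simp
  | cons a t ih =>
    simp only [Multiset.map_cons, Multiset.sum_cons, ih, Multiset.count_cons]
    by_cases hax : x = a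
    · rw [if_pos hax.symm, if_pos hax]
      push_cast
      ring
    · rw [if_neg (fun h => hax h.symm), if_neg hax]
      push_cast
      ring

/-- Extracting an entry of a `CArr` is additive. -/
def entryHom (d : ℕ) (R : Type*) [AddCommGroup R] (j j' : Fin (d + 1)) (k : Fin d) :
    CArr d R →+ R where
  toFun x := x j j' k
  map_zero' := rfl
  map_add' _ _ := rfl

end InjLemmas


/-- Lemma 3.6, nonunital form.  Let `F` be a field of characteristic `0`
and `n, d ≥ 1`.  Let `f ∈ F_{Ā,C̄}[X]` have degree `≤ d` and suppose `f ∉ I_comm` (i.e. the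
image of `f` in the free commutative nonassociative algebra `F_{Ā,C}[X] = F_{Ā,C̄}[X]/I_comm`
is nonzero).  Then the evaluation of `f` at `(Z_1, …, Z_n)` in `C'_d(R)` under the
anticommutator product `⊙` (the unique nonunital `F`-algebra homomorphism sending
`x_i ↦ Z_i`) is nonzero. -/
theorem anticommutator_eval_free_at_Z_ne_zero {F : Type*} [Field F] [CharZero F] (n d : ℕ)
    (hn : 1 ≤ n) (hd : 1 ≤ d)
    (f : FreeNonUnitalNonAssocAlgebra F (Fin n))
    (hdeg : ∀ m ∈ (coeffOf f).support, degM m ≤ d)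
    (hI : f ∉ Icomm F n) :
    evalNA (ZC F n d) f ≠ 0 := by
  classical
  obtain ⟨m₀, hm₀, hS⟩ := exists_good_class hI
  have he : degM m₀ ≤ d := hdeg m₀ hm₀
  have hd0 : 0 < d := hd
  have he1 : 1 ≤ degM m₀ := one_le_degM m₀
  intro h0
  have hj0 : (0 : ℕ) < d + 1 := by omega
  have hje : degM m₀ < d + 1 := by omega
  have hmono : ∀ m : FreeMagma (Fin n), degM m ≤ d →
      MvPolynomial.coeff (expOf d m₀)
        (evalWith (· * ·) (ZC F n d) m ⟨0, hj0⟩ ⟨degM m₀, hje⟩ ⟨0, hd0⟩)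
      = (Multiset.count m₀ (variants m) : F) := by
    intro m hm
    rw [evalC_eq]
    show MvPolynomial.coeff (expOf d m₀)
      ((((variants m).map fun m' => evalWith (· * ·) (Z F n d) m').sum :
        Arr d (MvPolynomial (Fin n × Fin d × Fin d) F))
          ⟨0, hj0⟩ ⟨degM m₀, hje⟩ ⟨0, hd0⟩) = _
    rw [Arr.multiset_sum_apply, Multiset.map_map]
    rw [← MvPolynomial.lcoeff_apply, map_multiset_sum, Multiset.map_map]
    rw [Multiset.map_congr rfl ?_, sum_map_indicator (F := F) (variants m) m₀]
    intro m' hm'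
    simp only [Function.comp_apply, MvPolynomial.lcoeff_apply]
    have hdm' : degM m' = degM m := degM_of_mem_variants hm'
    have hdep := depthM_le_degM m'
    rw [evalA_apply m' ⟨0, hj0⟩ ⟨degM m₀, hje⟩ ⟨0, hd0⟩
      (by simp only [Fin.val_mk]; omega) (by simp only [Fin.val_mk]; omega)]
    by_cases hcase : degM m = degM m₀
    · rw [if_pos (by simp only [Fin.val_mk]; omega)]
      simp only [Fin.val_mk]
      rw [monProd_eq_monomial hd0 m' (by omega), MvPolynomial.coeff_monomial]
      by_cases hmm : m' = m₀
      · rw [if_pos (by rw [hmm]), if_pos hmm]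
      · rw [if_neg (fun hexp => hmm (expOf_inj hd0 (by omega) he (by omega) hexp)),
          if_neg hmm]
    · rw [if_neg (by simp only [Fin.val_mk]; omega),
        if_neg (fun hmm => hcase (by rw [← hdm', hmm]))]
      exact MvPolynomial.coeff_zero _
  have hrepr : MvPolynomial.coeff (expOf d m₀)
      ((evalNA (ZC F n d) f) ⟨0, hj0⟩ ⟨degM m₀, hje⟩ ⟨0, hd0⟩)
      = ∑ m ∈ (coeffOf f).support,
          (coeffOf f) m * (Multiset.count m₀ (variants m) : F) := by
    have hdef : evalNA (ZC F n d) f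
        = ∑ m ∈ (coeffOf f).support, (coeffOf f) m • evalWith (· * ·) (ZC F n d) m := rfl
    rw [hdef]
    rw [show (∑ m ∈ (coeffOf f).support,
          (coeffOf f) m • evalWith (· * ·) (ZC F n d) m) ⟨0, hj0⟩ ⟨degM m₀, hje⟩ ⟨0, hd0⟩
        = ∑ m ∈ (coeffOf f).support,
            ((coeffOf f) m • evalWith (· * ·) (ZC F n d) m) ⟨0, hj0⟩ ⟨degM m₀, hje⟩ ⟨0, hd0⟩
      from map_sum (entryHom d _ ⟨0, hj0⟩ ⟨degM m₀, hje⟩ ⟨0, hd0⟩) _ _]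
    rw [MvPolynomial.coeff_sum]
    refine Finset.sum_congr rfl fun m hm => ?_
    have hsmul : ((coeffOf f) m • evalWith (· * ·) (ZC F n d) m)
          ⟨0, hj0⟩ ⟨degM m₀, hje⟩ ⟨0, hd0⟩
        = (coeffOf f) m •
          (evalWith (· * ·) (ZC F n d) m ⟨0, hj0⟩ ⟨degM m₀, hje⟩ ⟨0, hd0⟩) := rfl
    rw [hsmul, MvPolynomial.coeff_smul, smul_eq_mul, hmono m (hdeg m hm)]
  have hsplit : ∑ m ∈ (coeffOf f).support,
        (coeffOf f) m * (Multiset.count m₀ (variants m) : F)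
      = (Multiset.count m₀ (variants m₀) : F) *
        ∑ m ∈ (coeffOf f).support, (if CommEq m m₀ then (coeffOf f) m else 0) := by
    rw [Finset.mul_sum]
    refine Finset.sum_congr rfl fun m hm => ?_
    by_cases hc : CommEq m m₀
    · rw [if_pos hc, variants_eq_of_commEq hc, mul_comm]
    · rw [if_neg hc, mul_zero]
      have hnm : m₀ ∉ variants m := fun hmem => hc (commEq_of_mem_variants hmem)
      rw [Multiset.count_eq_zero.mpr hnm]
      simp
  have hcount : (Multiset.count m₀ (variants m₀) : F) ≠ 0 := by
    have h1 : 0 < Multiset.count m₀ (variants m₀) :=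
      Multiset.count_pos.mpr (mem_variants_self m₀)
    exact Nat.cast_ne_zero.mpr (by omega)
  rw [h0] at hrepr
  have hz : MvPolynomial.coeff (expOf d m₀)
      ((0 : CArr d (MvPolynomial (Fin n × Fin d × Fin d) F))
        ⟨0, hj0⟩ ⟨degM m₀, hje⟩ ⟨0, hd0⟩) = 0 := by
    show MvPolynomial.coeff _ (0 : MvPolynomial (Fin n × Fin d × Fin d) F) = 0
    exact MvPolynomial.coeff_zero _
  rw [hz] at hrepr
  exact mul_ne_zero hcount hS (hsplit.symm.trans hrepr.symm)


end NAPIT
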